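/- Let β > 1 be an algebraic integer of degree d+1 (d ≥ 1) with minimal polynomial X^{d+1} + b_d X^d + ⋯ + b_0 over ℤ, and define r = (r_0,…,r_{d-1}) ∈ ℝ^d by X^{d+1} + b_d X^d + ⋯ + b_0 = (X − β)(X^d + r_{d-1}X^{d-1} + ⋯ + r_0). Then β has property (F) — i.e., for every γ ∈ ℤ[1/β] with γ ≥ 0 there exist m, k ∈ ℕ such that γ/β^m ∈ [0,1) and T_β^k(γ/β^m) = 0 — if and only if r ∈ D_d^{(0)}, i.e., for every z ∈ ℤ^d there exists k ∈ ℕ with τ_r^k(z) = 0. -/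

import Mathlib

open Polynomial

/-- The shift radix system `τ_r : ℤ^d → ℤ^d`. -/
noncomputable def srsMap (d : ℕ) (r : Fin d → ℝ) (z : Fin d → ℤ) : Fin d → ℤ :=
  fun i =>
    if h : (i : ℕ) + 1 < d then z ⟨(i : ℕ) + 1, h⟩
    else -⌊∑ j, r j * (z j : ℝ)⌋

/-- The beta-transformation `T_β(γ) = βγ - ⌊βγ⌋`. -/
noncomputable def betaT (β : ℝ) (x : ℝ) : ℝ := Int.fract (β * x)

lemma coeff_aux {n : ℕ} (c : Fin n → ℝ) (k : ℕ) :
    (X ^ n + ∑ i : Fin n, C (c i) * X ^ (i : ℕ)).coeff k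
      = (if k = n then 1 else 0) + (if h : k < n then c ⟨k, h⟩ else 0) := by
  rw [coeff_add, coeff_X_pow, finset_sum_coeff]
  congr 1
  simp only [coeff_C_mul, coeff_X_pow]
  by_cases h : k < n
  · rw [Finset.sum_eq_single (⟨k, h⟩ : Fin n)]
    · simp [h]
    · intro i _ hi
      have : k ≠ (i : ℕ) := by
        intro hk; apply hi; apply Fin.ext; simp [← hk]
      simp [this]
    · simp
  · rw [dif_neg h, Finset.sum_eq_zero]
    intro i _
    have : k ≠ (i : ℕ) := by have := i.2; omega
    simp [this]

section Main
variable {e : ℕ} {β : ℝ} {b : Fin (e + 2) → ℤ} {r : Fin (e + 1) → ℝ}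

-- coefficient relations extracted from the factorization
lemma rel_of_hfac
    (hfac : (X ^ (e + 1 + 1) + ∑ i : Fin (e + 1 + 1), C ((b i : ℝ)) * X ^ (i : ℕ))
      = (X - C β) * (X ^ (e + 1) + ∑ i : Fin (e + 1), C (r i) * X ^ (i : ℕ))) :
    (β * r 0 = -(b 0 : ℝ))
    ∧ (∀ i : Fin e, β * r i.succ = r i.castSucc - (b i.succ.castSucc : ℝ))
    ∧ (β = r (Fin.last e) - (b (Fin.last (e + 1)) : ℝ)) := by
  set Q : ℝ[X] := X ^ (e + 1) + ∑ i : Fin (e + 1), C (r i) * X ^ (i : ℕ) with hQ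
  have hQc : ∀ k : ℕ, Q.coeff k
      = (if k = e + 1 then 1 else 0) + (if h : k < e + 1 then r ⟨k, h⟩ else 0) :=
    fun k => coeff_aux r k
  have key : ∀ k : ℕ,
      (if k = e + 1 + 1 then (1:ℝ) else 0) + (if h : k < e + 1 + 1 then ((b ⟨k, h⟩ : ℤ) : ℝ) else 0)
        = ((X - C β) * Q).coeff k := by
    intro k
    have h := congrArg (fun p => Polynomial.coeff p k) hfac
    rw [coeff_aux (fun i : Fin (e+1+1) => ((b i : ℤ):ℝ)) k] at h
    exact h
  have prod_coeff : ∀ k : ℕ, ((X - C β) * Q).coeff (k + 1) = Q.coeff k - β * Q.coeff (k + 1) := by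
    intro k
    rw [sub_mul, coeff_sub, coeff_X_mul, coeff_C_mul]
  have prod_coeff0 : ((X - C β) * Q).coeff 0 = -(β * Q.coeff 0) := by
    rw [sub_mul, coeff_sub, mul_coeff_zero, coeff_X_zero, coeff_C_mul, zero_mul, zero_sub]
  refine ⟨?_, ?_, ?_⟩
  · have h := (key 0).trans prod_coeff0
    rw [hQc 0] at h
    simp at h
    linarith [h]
  · intro i
    have hi := i.2
    have h := (key (↑i + 1)).trans (prod_coeff ↑i)
    rw [hQc ↑i, hQc (↑i+1)] at h
    have h1 : ¬(↑i + 1 = e + 1 + 1) := by omega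
    have h2 : (↑i + 1 < e + 1 + 1) := by omega
    have h3 : ¬(↑i = e + 1) := by omega
    have h4 : (↑i < e + 1) := by omega
    have h5 : ¬(↑i + 1 = e + 1) := by omega
    have h6 : (↑i + 1 < e + 1) := by omega
    rw [if_neg h1, dif_pos h2, if_neg h3, dif_pos h4, if_neg h5, dif_pos h6] at h
    have hc : i.succ.castSucc = (⟨↑i + 1, h2⟩ : Fin (e+2)) := by apply Fin.ext; simp
    have hc2 : i.succ = (⟨↑i + 1, h6⟩ : Fin (e+1)) := by apply Fin.ext; simp
    have hc3 : i.castSucc = (⟨↑i, h4⟩ : Fin (e+1)) := by apply Fin.ext; simp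
    rw [hc, hc2, hc3]
    linarith [h]
  · have h := (key (e + 1)).trans (prod_coeff e)
    rw [hQc e, hQc (e+1)] at h
    have h1 : ¬(e + 1 = e + 1 + 1) := by omega
    have h2 : (e + 1 < e + 1 + 1) := by omega
    have h3 : ¬(e = e + 1) := by omega
    have h4 : (e < e + 1) := by omega
    have h5 : (e + 1 = e + 1) := rfl
    have h6 : ¬(e + 1 < e + 1) := by omega
    rw [if_neg h1, dif_pos h2, if_neg h3, dif_pos h4, if_pos h5, dif_neg h6] at h
    show β = r ⟨e, h4⟩ - (b ⟨e + 1, h2⟩ : ℝ)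
    linarith [h]



lemma beta_mul_dot
    (h0 : β * r 0 = -(b 0 : ℝ))
    (hA : ∀ i : Fin e, β * r i.succ = r i.castSucc - (b i.succ.castSucc : ℝ))
    (z : Fin (e + 1) → ℤ) :
    β * (∑ j, r j * (z j : ℝ))
      = (∑ i : Fin e, r i.castSucc * (z i.succ : ℝ))
        - ((b 0 : ℝ) * (z 0 : ℝ) + ∑ i : Fin e, (b i.succ.castSucc : ℝ) * (z i.succ : ℝ)) := by
  rw [Finset.mul_sum, Fin.sum_univ_succ]
  have : ∀ i : Fin e, β * (r i.succ * (z i.succ : ℝ))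
      = r i.castSucc * (z i.succ : ℝ) - (b i.succ.castSucc : ℝ) * (z i.succ : ℝ) := by
    intro i
    rw [← mul_assoc, hA i, sub_mul]
  rw [Finset.sum_congr rfl (fun i _ => this i), Finset.sum_sub_distrib, ← mul_assoc, h0]
  ring

lemma srs_cast (z : Fin (e + 1) → ℤ) (i : Fin e) :
    srsMap (e + 1) r z i.castSucc = z i.succ := by
  unfold srsMap
  rw [dif_pos (by simpa using i.2)]
  congr 1

lemma srs_last (z : Fin (e + 1) → ℤ) :
    srsMap (e + 1) r z (Fin.last e) = -⌊∑ j, r j * (z j : ℝ)⌋ := by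
  unfold srsMap
  rw [dif_neg (by simp)]

lemma conj_step
    (h0 : β * r 0 = -(b 0 : ℝ))
    (hA : ∀ i : Fin e, β * r i.succ = r i.castSucc - (b i.succ.castSucc : ℝ))
    (hB : β = r (Fin.last e) - (b (Fin.last (e + 1)) : ℝ))
    (z : Fin (e + 1) → ℤ) :
    betaT β (Int.fract (∑ j, r j * (z j : ℝ)))
      = Int.fract (∑ j, r j * ((srsMap (e + 1) r z j : ℤ) : ℝ)) := by
  set s := ∑ j, r j * (z j : ℝ) with hs
  have hfr : β * Int.fract s = β * s - β * (⌊s⌋ : ℝ) := by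
    rw [Int.fract]; ring
  have hsplit : (∑ j, r j * ((srsMap (e + 1) r z j : ℤ) : ℝ))
      = (∑ i : Fin e, r i.castSucc * ((srsMap (e + 1) r z i.castSucc : ℤ) : ℝ))
        + r (Fin.last e) * ((srsMap (e + 1) r z (Fin.last e) : ℤ) : ℝ) :=
    Fin.sum_univ_castSucc _
  have hK : β * s - β * (⌊s⌋ : ℝ)
      = (∑ j, r j * ((srsMap (e + 1) r z j : ℤ) : ℝ))
        + ((-(b 0 * z 0) - (∑ i : Fin e, b i.succ.castSucc * z i.succ)
            + b (Fin.last (e + 1)) * ⌊s⌋ : ℤ) : ℝ) := by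
    rw [hsplit, srs_last z, beta_mul_dot h0 hA z, hB,
      show (∑ i : Fin e, r i.castSucc * ((srsMap (e + 1) r z i.castSucc : ℤ) : ℝ))
          = ∑ i : Fin e, r i.castSucc * ((z i.succ : ℤ) : ℝ) from
        Finset.sum_congr rfl (fun i _ => by rw [srs_cast])]
    push_cast
    ring
  rw [betaT, hfr, hK, Int.fract_add_intCast]





lemma r_mem_Rinv (hβ0 : β ≠ 0)
    (h0 : β * r 0 = -(b 0 : ℝ))
    (hA : ∀ i : Fin e, β * r i.succ = r i.castSucc - (b i.succ.castSucc : ℝ)) :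
    ∀ j, r j ∈ Subring.closure ({β⁻¹} : Set ℝ) := by
  have hβi : β⁻¹ ∈ Subring.closure ({β⁻¹} : Set ℝ) :=
    Subring.subset_closure rfl
  intro j
  induction j using Fin.induction with
  | zero =>
    have hr : r 0 = β⁻¹ * (β * r 0) := by field_simp
    rw [hr, h0]
    exact mul_mem hβi (neg_mem (intCast_mem _ _))
  | succ i ih =>
    have hr : r i.succ = β⁻¹ * (β * r i.succ) := by field_simp
    rw [hr, hA i]
    exact mul_mem hβi (sub_mem ih (intCast_mem _ _))

lemma r_mem_S
    (hA : ∀ i : Fin e, β * r i.succ = r i.castSucc - (b i.succ.castSucc : ℝ))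
    (hB : β = r (Fin.last e) - (b (Fin.last (e + 1)) : ℝ)) :
    ∀ j, r j ∈ Subring.closure ({β} : Set ℝ) := by
  have hβm : β ∈ Subring.closure ({β} : Set ℝ) := Subring.subset_closure rfl
  intro j
  induction j using Fin.reverseInduction with
  | last =>
    have : r (Fin.last e) = β + (b (Fin.last (e + 1)) : ℝ) := by linarith [hB]
    rw [this]
    exact add_mem hβm (intCast_mem _ _)
  | cast i ih =>
    have : r i.castSucc = β * r i.succ + (b i.succ.castSucc : ℝ) := by linarith [hA i]
    rw [this]
    exact add_mem (mul_mem hβm ih) (intCast_mem _ _)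

lemma mem_S_aeval {x : ℝ} (hx : x ∈ Subring.closure ({β} : Set ℝ)) :
    ∃ p : ℤ[X], aeval β p = x := by
  have : Subring.closure ({β} : Set ℝ) ≤ ((aeval β : ℤ[X] →ₐ[ℤ] ℝ) : ℤ[X] →+* ℝ).range := by
    apply Subring.closure_le.mpr
    intro y hy
    rcases hy with rfl
    exact ⟨X, by simp⟩
  exact this hx

/-- the additive subgroup `ℤ + ℤ r_0 + ⋯ + ℤ r_{d-1}` as a predicate -/
def InM {d : ℕ} (r : Fin d → ℝ) (x : ℝ) : Prop :=
  ∃ n : ℤ, ∃ z : Fin d → ℤ, x = (n : ℝ) + ∑ j, r j * (z j : ℝ)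

lemma InM_int {d : ℕ} (r : Fin d → ℝ) (n : ℤ) : InM r (n : ℝ) :=
  ⟨n, 0, by simp⟩

lemma InM_add {d : ℕ} {r : Fin d → ℝ} {x y : ℝ} (hx : InM r x) (hy : InM r y) :
    InM r (x + y) := by
  obtain ⟨n, z, rfl⟩ := hx
  obtain ⟨m, w, rfl⟩ := hy
  refine ⟨n + m, z + w, ?_⟩
  rw [show (∑ j, r j * ((z + w) j : ℝ)) = ∑ j, (r j * (z j : ℝ) + r j * (w j : ℝ)) from
    Finset.sum_congr rfl fun j _ => by push_cast [Pi.add_apply]; ring, Finset.sum_add_distrib]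
  push_cast
  ring

lemma InM_zsmul {d : ℕ} {r : Fin d → ℝ} {x : ℝ} (c : ℤ) (hx : InM r x) :
    InM r (c * x) := by
  obtain ⟨n, z, rfl⟩ := hx
  refine ⟨c * n, c • z, ?_⟩
  rw [show (∑ j, r j * ((c • z) j : ℝ)) = ∑ j, (c : ℝ) * (r j * (z j : ℝ)) from
    Finset.sum_congr rfl fun j _ => by push_cast [Pi.smul_apply, smul_eq_mul]; ring,
    ← Finset.mul_sum]
  push_cast
  ring

lemma InM_beta
    (h0 : β * r 0 = -(b 0 : ℝ))
    (hA : ∀ i : Fin e, β * r i.succ = r i.castSucc - (b i.succ.castSucc : ℝ))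
    (hB : β = r (Fin.last e) - (b (Fin.last (e + 1)) : ℝ))
    {x : ℝ} (hx : InM r x) : InM r (β * x) := by
  obtain ⟨n, z, rfl⟩ := hx
  set w : Fin (e + 1) → ℤ := fun j => if h : (j : ℕ) + 1 < e + 1 then z ⟨(j : ℕ) + 1, h⟩ else n
    with hw
  have hwc : ∀ i : Fin e, w i.castSucc = z i.succ := by
    intro i
    rw [hw]
    simp only
    rw [dif_pos (by simpa using i.2)]
    congr 1
  have hwl : w (Fin.last e) = n := by
    rw [hw]; simp
  refine ⟨-(b (Fin.last (e + 1)) * n) - b 0 * z 0 - ∑ i : Fin e, b i.succ.castSucc * z i.succ,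
    w, ?_⟩
  rw [mul_add, beta_mul_dot h0 hA z,
    show (∑ j, r j * ((w j : ℤ) : ℝ))
        = (∑ i : Fin e, r i.castSucc * ((w i.castSucc : ℤ) : ℝ))
          + r (Fin.last e) * ((w (Fin.last e) : ℤ) : ℝ) from Fin.sum_univ_castSucc _,
    show (∑ i : Fin e, r i.castSucc * ((w i.castSucc : ℤ) : ℝ))
        = ∑ i : Fin e, r i.castSucc * ((z i.succ : ℤ) : ℝ) from
      Finset.sum_congr rfl (fun i _ => by rw [hwc]), hwl, hB]
  push_cast
  ring

lemma InM_pow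
    (h0 : β * r 0 = -(b 0 : ℝ))
    (hA : ∀ i : Fin e, β * r i.succ = r i.castSucc - (b i.succ.castSucc : ℝ))
    (hB : β = r (Fin.last e) - (b (Fin.last (e + 1)) : ℝ)) :
    ∀ k : ℕ, InM r (β ^ k) := by
  intro k
  induction k with
  | zero => simpa using InM_int r 1
  | succ k ih => rw [pow_succ, mul_comm]; exact InM_beta h0 hA hB ih

lemma InM_of_S
    (h0 : β * r 0 = -(b 0 : ℝ))
    (hA : ∀ i : Fin e, β * r i.succ = r i.castSucc - (b i.succ.castSucc : ℝ))
    (hB : β = r (Fin.last e) - (b (Fin.last (e + 1)) : ℝ))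
    {x : ℝ} (hx : x ∈ Subring.closure ({β} : Set ℝ)) : InM r x := by
  obtain ⟨p, rfl⟩ := mem_S_aeval hx
  rw [Polynomial.aeval_eq_sum_range]
  apply Finset.sum_induction _ (InM r) (fun _ _ => InM_add) (by simpa using InM_int r 0)
  intro i _
  rw [zsmul_eq_mul]
  exact InM_zsmul _ (InM_pow h0 hA hB i)

lemma exists_pow_mul_mem_S (hβ0 : β ≠ 0) {γ : ℝ}
    (hγ : γ ∈ Subring.closure ({β⁻¹} : Set ℝ)) :
    ∃ n : ℕ, β ^ n * γ ∈ Subring.closure ({β} : Set ℝ) := by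
  set S := Subring.closure ({β} : Set ℝ) with hS
  have hβS : β ∈ S := Subring.subset_closure rfl
  let V : Subring ℝ :=
    { carrier := {x | ∃ n : ℕ, β ^ n * x ∈ S}
      zero_mem' := ⟨0, by simpa using zero_mem S⟩
      one_mem' := ⟨0, by simpa using one_mem S⟩
      add_mem' := by
        rintro x y ⟨nx, hx⟩ ⟨ny, hy⟩
        refine ⟨nx + ny, ?_⟩
        have : β ^ (nx + ny) * (x + y) = β ^ ny * (β ^ nx * x) + β ^ nx * (β ^ ny * y) := by
          rw [pow_add]; ring
        rw [this]
        exact add_mem (mul_mem (pow_mem hβS ny) hx) (mul_mem (pow_mem hβS nx) hy)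
      neg_mem' := by
        rintro x ⟨n, hx⟩
        exact ⟨n, by rw [mul_neg]; exact neg_mem hx⟩
      mul_mem' := by
        rintro x y ⟨nx, hx⟩ ⟨ny, hy⟩
        refine ⟨nx + ny, ?_⟩
        have : β ^ (nx + ny) * (x * y) = (β ^ nx * x) * (β ^ ny * y) := by
          rw [pow_add]; ring
        rw [this]
        exact mul_mem hx hy }
  have hle : Subring.closure ({β⁻¹} : Set ℝ) ≤ V := by
    apply Subring.closure_le.mpr
    intro y hy
    rcases hy with rfl
    exact ⟨1, by rw [pow_one, mul_inv_cancel₀ hβ0]; exact one_mem S⟩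
  exact hle hγ

/-- integer polynomials representing the `r j` -/
noncomputable def rho {e : ℕ} (b : Fin (e + 2) → ℤ) : ℕ → Polynomial ℤ
  | 0 => X + C (b (Fin.last (e + 1)))
  | (t + 1) => C (b ⟨e - t, by omega⟩) + X * rho b t

lemma rho_monic (t : ℕ) : (rho b t).Monic ∧ (rho b t).natDegree = t + 1 := by
  induction t with
  | zero => exact ⟨monic_X_add_C _, natDegree_X_add_C _⟩
  | succ t ih =>
    obtain ⟨hm, hdeg⟩ := ih
    have hXm : (X * rho b t).Monic := monic_X.mul hm
    have hXdeg : (X * rho b t).natDegree = t + 2 := by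
      rw [monic_X.natDegree_mul hm, natDegree_X, hdeg]; omega
    have hdegC : (C (b ⟨e - t, by omega⟩) : ℤ[X]).degree < (X * rho b t).degree :=
      lt_of_le_of_lt degree_C_le (natDegree_pos_iff_degree_pos.mp (by omega))
    constructor
    · rw [rho, add_comm]
      exact hXm.add_of_left hdegC
    · rw [rho, add_comm, natDegree_add_eq_left_of_degree_lt hdegC, hXdeg]

lemma rho_aeval
    (hA : ∀ i : Fin e, β * r i.succ = r i.castSucc - (b i.succ.castSucc : ℝ))
    (hB : β = r (Fin.last e) - (b (Fin.last (e + 1)) : ℝ)) :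
    ∀ t, (ht : t ≤ e) → aeval β (rho b t) = r ⟨e - t, by omega⟩ := by
  intro t
  induction t with
  | zero =>
    intro _
    have : (⟨e - 0, by omega⟩ : Fin (e + 1)) = Fin.last e := by
      apply Fin.ext; simp
    rw [this, rho]
    simp only [map_add, aeval_X, aeval_C, algebraMap_int_eq, eq_intCast, map_intCast]
    linarith [hB]
  | succ t ih =>
    intro ht
    have ht' : t ≤ e := by omega
    have hrel := hA ⟨e - t - 1, by omega⟩
    have h1 : (⟨e - t - 1, by omega⟩ : Fin e).succ = (⟨e - t, by omega⟩ : Fin (e + 1)) :=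
      Fin.ext (by simp [Fin.val_succ]; omega)
    have h2 : (⟨e - t - 1, by omega⟩ : Fin e).castSucc = (⟨e - (t + 1), by omega⟩ : Fin (e + 1)) :=
      Fin.ext (by simp [Fin.coe_castSucc]; omega)
    have h3 : ((⟨e - t - 1, by omega⟩ : Fin e).succ).castSucc = (⟨e - t, by omega⟩ : Fin (e + 2)) :=
      Fin.ext (by simp; omega)
    have h4 : ((⟨e - t, by omega⟩ : Fin (e + 1)) : Fin (e + 1)).castSucc
        = (⟨e - t, by omega⟩ : Fin (e + 2)) := Fin.ext (by simp)
    simp only [h3, h1, h2, h4] at hrel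
    rw [rho]
    simp only [map_add, map_mul, aeval_X, aeval_C, algebraMap_int_eq, eq_intCast, map_intCast]
    rw [ih ht']
    linarith [hrel]

lemma indep
    (hint : IsIntegral ℤ β)
    (hmindeg : (minpoly ℤ β).natDegree = e + 2)
    (hA : ∀ i : Fin e, β * r i.succ = r i.castSucc - (b i.succ.castSucc : ℝ))
    (hB : β = r (Fin.last e) - (b (Fin.last (e + 1)) : ℝ))
    (z : Fin (e + 1) → ℤ) (n : ℤ)
    (hz : (∑ j, r j * (z j : ℝ)) = (n : ℝ)) : z = 0 := by
  by_contra hne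
  have hex : ∃ j, z j ≠ 0 := by
    by_contra h
    push_neg at h
    exact hne (funext fun j => h j)
  set T : Finset (Fin (e + 1)) := Finset.univ.filter (fun j => z j ≠ 0) with hT
  have hTne : T.Nonempty := by
    obtain ⟨j, hj⟩ := hex
    exact ⟨j, by simp [hT, hj]⟩
  set j₀ : Fin (e + 1) := T.min' hTne with hj₀
  have hj₀T : j₀ ∈ T := T.min'_mem hTne
  have hz₀ : z j₀ ≠ 0 := by simpa [hT] using hj₀T
  have hmin' : ∀ j, z j ≠ 0 → j₀ ≤ j := fun j hj => T.min'_le j (by simp [hT, hj])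
  set p : ℤ[X] := (∑ j : Fin (e + 1), C (z j) * rho b (e - (j : ℕ))) - C n with hp
  -- aeval β p = 0
  have haeval : aeval β p = 0 := by
    rw [hp, map_sub, map_sum]
    have : ∀ j : Fin (e + 1), aeval β (C (z j) * rho b (e - (j : ℕ)))
        = (z j : ℝ) * r j := by
      intro j
      have hj := j.2
      rw [map_mul, aeval_C, rho_aeval hA hB (e - (j : ℕ)) (by omega)]
      rw [show (⟨e - (e - (j : ℕ)), by omega⟩ : Fin (e + 1)) = j from Fin.ext (by simp; omega)]
      simp
    rw [Finset.sum_congr rfl (fun j _ => this j)]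
    rw [show (∑ j : Fin (e + 1), (z j : ℝ) * r j) = ∑ j : Fin (e + 1), r j * (z j : ℝ) from
      Finset.sum_congr rfl (fun j _ => mul_comm _ _), hz]
    simp
  -- the coefficient of p at e - j₀ + 1 equals z j₀, so p ≠ 0
  have hcoeff : p.coeff (e - (j₀ : ℕ) + 1) = z j₀ := by
    rw [hp, coeff_sub, finset_sum_coeff]
    have hCn : (C n).coeff (e - (j₀ : ℕ) + 1) = 0 := by
      rw [coeff_C, if_neg (by omega)]
    rw [hCn, sub_zero]
    rw [Finset.sum_eq_single j₀]
    · obtain ⟨hm, hdeg⟩ := rho_monic (b := b) (e - (j₀ : ℕ))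
      rw [coeff_C_mul, ← hdeg, coeff_natDegree, hm.leadingCoeff, mul_one]
    · intro j _ hjne
      rcases lt_or_gt_of_ne (fun h : (j : ℕ) = (j₀ : ℕ) => hjne (Fin.ext h)) with h | h
      · -- j < j₀ : z j = 0
        have : z j = 0 := by
          by_contra hzj
          exact absurd (hmin' j hzj) (by rw [Fin.le_def]; omega)
        rw [this]
        simp
      · -- j > j₀ : degree too small
        obtain ⟨hm, hdeg⟩ := rho_monic (b := b) (e - (j : ℕ))
        have hj2 := j.2
        have hj02 := j₀.2
        rw [coeff_C_mul, coeff_eq_zero_of_natDegree_lt (by omega : (rho b (e - (j : ℕ))).natDegree < e - (j₀ : ℕ) + 1), mul_zero]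
    · intro h
      exact absurd (Finset.mem_univ j₀) h
  have hpne : p ≠ 0 := fun h => hz₀ (by rw [h] at hcoeff; simpa using hcoeff.symm)
  -- degree bound
  have hpd : p.natDegree ≤ e + 1 := by
    rw [hp]
    refine le_trans (natDegree_sub_le _ _) (max_le ?_ (by simp))
    refine le_trans (natDegree_sum_le _ _) ?_
    apply (Finset.fold_max_le _).mpr
    constructor
    · omega
    · intro j _
      refine le_trans (natDegree_C_mul_le _ _) ?_
      rw [(rho_monic (b := b) (e - (j : ℕ))).2]
      have := j.2
      omega
  have hdvd : minpoly ℤ β ∣ p := minpoly.isIntegrallyClosed_dvd hint haeval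
  have := Polynomial.natDegree_le_of_dvd hdvd hpne
  omega

lemma iter_mem_Ico {β x : ℝ} (hx : x ∈ Set.Ico (0:ℝ) 1) (k : ℕ) :
    (betaT β)^[k] x ∈ Set.Ico (0:ℝ) 1 := by
  induction k with
  | zero => exact hx
  | succ k ih =>
    rw [Function.iterate_succ_apply']
    exact ⟨Int.fract_nonneg _, Int.fract_lt_one _⟩

lemma iter_sub (β x : ℝ) (k : ℕ) :
    ∃ N ∈ Subring.closure ({β} : Set ℝ), (betaT β)^[k] x = β ^ k * x - N := by
  induction k with
  | zero => exact ⟨0, zero_mem _, by simp⟩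
  | succ k ih =>
    obtain ⟨N, hN, hiter⟩ := ih
    refine ⟨β * N + (⌊β * (β ^ k * x - N)⌋ : ℝ), add_mem (mul_mem (Subring.subset_closure rfl) hN)
      (intCast_mem _ _), ?_⟩
    rw [Function.iterate_succ_apply', hiter, betaT, Int.fract, pow_succ]
    push_cast
    ring

lemma iter_div {β x : ℝ} (hβ : 1 < β) (hx : x ∈ Set.Ico (0:ℝ) 1) (m : ℕ) :
    ∀ j, j ≤ m → (betaT β)^[j] (x / β ^ m) = x / β ^ (m - j) := by
  have hβ0 : (0:ℝ) < β := by linarith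
  intro j
  induction j with
  | zero => intro _; simp
  | succ j ih =>
    intro hj
    rw [Function.iterate_succ_apply', ih (by omega), betaT]
    have hms : m - j = (m - (j + 1)) + 1 := by omega
    have harg : β * (x / β ^ (m - j)) = x / β ^ (m - (j + 1)) := by
      rw [hms, pow_succ]
      field_simp
    rw [harg]
    apply Int.fract_eq_self.mpr
    constructor
    · exact div_nonneg hx.1 (pow_pos hβ0 _).le
    · exact (div_lt_one (pow_pos hβ0 _)).mpr (lt_of_lt_of_le hx.2 (one_le_pow₀ hβ.le))

lemma conj_iter
    (h0 : β * r 0 = -(b 0 : ℝ))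
    (hA : ∀ i : Fin e, β * r i.succ = r i.castSucc - (b i.succ.castSucc : ℝ))
    (hB : β = r (Fin.last e) - (b (Fin.last (e + 1)) : ℝ))
    (z : Fin (e + 1) → ℤ) (k : ℕ) :
    (betaT β)^[k] (Int.fract (∑ j, r j * (z j : ℝ)))
      = Int.fract (∑ j, r j * (((srsMap (e + 1) r)^[k] z j : ℤ) : ℝ)) := by
  induction k with
  | zero => simp
  | succ k ih =>
    rw [Function.iterate_succ_apply', ih, conj_step h0 hA hB,
      Function.iterate_succ_apply']

lemma mindeg (hmin : minpoly ℤ β = X ^ (e + 2) + ∑ i : Fin (e + 2), C (b i) * X ^ (i : ℕ)) :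
    (minpoly ℤ β).natDegree = e + 2 := by
  rw [hmin]
  have hsum : (∑ i : Fin (e + 2), C (b i) * X ^ (i : ℕ)).natDegree ≤ e + 1 :=
    le_trans (natDegree_sum_le _ _) ((Finset.fold_max_le _).mpr
      ⟨by omega, fun i _ => le_trans (natDegree_C_mul_le _ _)
        (by rw [natDegree_X_pow]; omega)⟩)
  rw [natDegree_add_eq_left_of_natDegree_lt (by rw [natDegree_X_pow]; omega), natDegree_X_pow]

end Main

/-- `β` has property (F) if and only if `r ∈ D_d^{(0)}`. -/
theorem propertyF_iff_srs_finiteness (d : ℕ) (hd : 1 ≤ d) (β : ℝ) (hβ : 1 < β)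
    (hint : IsIntegral ℤ β) (b : Fin (d + 1) → ℤ)
    (hmin : minpoly ℤ β
      = X ^ (d + 1) + ∑ i : Fin (d + 1), C (b i) * X ^ (i : ℕ))
    (r : Fin d → ℝ)
    (hfac : (X ^ (d + 1) + ∑ i : Fin (d + 1), C ((b i : ℝ)) * X ^ (i : ℕ))
      = (X - C β) * (X ^ d + ∑ i : Fin d, C (r i) * X ^ (i : ℕ))) :
    (∀ γ : ℝ, γ ∈ Subring.closure ({β⁻¹} : Set ℝ) → 0 ≤ γ →
        ∃ m k : ℕ, γ / β ^ m ∈ Set.Ico (0 : ℝ) 1 ∧ (betaT β)^[k] (γ / β ^ m) = 0)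
      ↔ (∀ z : Fin d → ℤ, ∃ k : ℕ, (srsMap d r)^[k] z = 0) := by
  obtain ⟨e, rfl⟩ : ∃ e, d = e + 1 := ⟨d - 1, by omega⟩
  obtain ⟨h0, hA, hB⟩ := rel_of_hfac hfac
  have hβpos : (0:ℝ) < β := by linarith
  have hβ0 : β ≠ 0 := ne_of_gt hβpos
  have hmdeg : (minpoly ℤ β).natDegree = e + 2 := mindeg hmin
  constructor
  · -- property (F) implies SRS finiteness
    intro hF z
    set s : ℝ := ∑ j, r j * (z j : ℝ) with hs
    set x : ℝ := Int.fract s with hx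
    have hxIco : x ∈ Set.Ico (0:ℝ) 1 := ⟨Int.fract_nonneg _, Int.fract_lt_one _⟩
    have hxmem : x ∈ Subring.closure ({β⁻¹} : Set ℝ) := by
      have hrmem := r_mem_Rinv hβ0 h0 hA
      have hsmem : s ∈ Subring.closure ({β⁻¹} : Set ℝ) :=
        Subring.sum_mem _ (fun j _ => mul_mem (hrmem j) (intCast_mem _ _))
      rw [hx, Int.fract]
      exact sub_mem hsmem (intCast_mem _ _)
    obtain ⟨m, k, _, hTk⟩ := hF x hxmem hxIco.1
    have hKex : ∃ K, (betaT β)^[K] x = 0 := by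
      rcases le_or_gt m k with hmk | hkm
      · refine ⟨k - m, ?_⟩
        have h1 : (betaT β)^[m] (x / β ^ m) = x := by
          have := iter_div hβ hxIco m m le_rfl
          simpa using this
        have h2 : (betaT β)^[k] (x / β ^ m)
            = (betaT β)^[k - m] ((betaT β)^[m] (x / β ^ m)) := by
          rw [← Function.iterate_add_apply]
          congr 1
          omega
        rw [h2, h1] at hTk
        exact hTk
      · refine ⟨0, ?_⟩
        rw [iter_div hβ hxIco m k (le_of_lt hkm)] at hTk
        have hx0 : x = 0 := by
          have hpow : β ^ (m - k) ≠ 0 := pow_ne_zero _ hβ0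
          field_simp at hTk
          simpa using hTk
        simpa using hx0
    obtain ⟨K, hK⟩ := hKex
    have hconj := conj_iter h0 hA hB z K
    rw [hx, hs] at hK
    rw [hK] at hconj
    set w : Fin (e + 1) → ℤ := (srsMap (e + 1) r)^[K] z with hw
    have hw0 : Int.fract (∑ j, r j * (w j : ℝ)) = 0 := hconj.symm
    have hint' : (∑ j, r j * (w j : ℝ)) = ((⌊∑ j, r j * (w j : ℝ)⌋ : ℤ) : ℝ) := by
      rw [Int.fract] at hw0
      linarith [hw0]
    exact ⟨K, indep hint hmdeg hA hB w _ hint'⟩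
  · -- SRS finiteness implies property (F)
    intro hSRS γ hγ hγ0
    obtain ⟨n, hn⟩ := exists_pow_mul_mem_S hβ0 hγ
    obtain ⟨m, hm⟩ := pow_unbounded_of_one_lt γ hβ
    have hpow : (0:ℝ) < β ^ m := pow_pos hβpos m
    have hIco : γ / β ^ m ∈ Set.Ico (0:ℝ) 1 :=
      ⟨div_nonneg hγ0 hpow.le, (div_lt_one hpow).mpr hm⟩
    obtain ⟨N, hNS, hiter⟩ := iter_sub β (γ / β ^ m) (m + n)
    have hx'Ico : (betaT β)^[m + n] (γ / β ^ m) ∈ Set.Ico (0:ℝ) 1 := iter_mem_Ico hIco (m + n)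
    have hx'S : (betaT β)^[m + n] (γ / β ^ m) ∈ Subring.closure ({β} : Set ℝ) := by
      rw [hiter, show β ^ (m + n) * (γ / β ^ m) = β ^ n * γ by
        rw [pow_add]; field_simp]
      exact sub_mem hn hNS
    obtain ⟨nz, z, hz⟩ := InM_of_S h0 hA hB hx'S
    have hxz : (betaT β)^[m + n] (γ / β ^ m) = Int.fract (∑ j, r j * (z j : ℝ)) := by
      have h1 : (∑ j, r j * (z j : ℝ)) = (betaT β)^[m + n] (γ / β ^ m) - nz := by
        linarith [hz]
      rw [h1, Int.fract_sub_intCast, Int.fract_eq_self.mpr ⟨hx'Ico.1, hx'Ico.2⟩]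
    obtain ⟨K, hK⟩ := hSRS z
    have hconj := conj_iter h0 hA hB z K
    rw [hK] at hconj
    have hzero : (betaT β)^[K] ((betaT β)^[m + n] (γ / β ^ m)) = 0 := by
      rw [hxz, hconj]
      simp
    exact ⟨m, K + (m + n), hIco, by rw [Function.iterate_add_apply]; exact hzero⟩
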